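/- There is a finite constant C₀ such that for all integers J ≥ 1 and all θ ∈ B(π) with θ ≠ 0, sup_{K > J} |∑_{y ∈ D_K \ D_J} e^{i θ·y} / |y|²| ≤ C₀ / (1 ∧ (J ‖θ‖_∞)), where the supremum is over integers K > J. -/

import Mathlib

open Filter MeasureTheory Real Finset
open scoped BigOperators

noncomputable section

/-- `T_k = (−k/2, k/2]² ∩ ℤ²`. -/
def Tset (k : ℝ) : Finset (ℤ × ℤ) :=
  Finset.Ioc ⌊-k / 2⌋ ⌊k / 2⌋ ×ˢ Finset.Ioc ⌊-k / 2⌋ ⌊k / 2⌋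

/-- `Λ_k = [−k/2, k/2]² ∩ ℤ²`. -/
def Lam (k : ℝ) : Finset (ℤ × ℤ) :=
  Finset.Icc ⌈-k / 2⌉ ⌊k / 2⌋ ×ˢ Finset.Icc ⌈-k / 2⌉ ⌊k / 2⌋

open scoped Classical in
/-- `D_k = {x ∈ ℤ² : |x| ≤ k/2}` (Euclidean norm). -/
def Dset (k : ℝ) : Finset (ℤ × ℤ) :=
  (Lam k).filter fun x => Real.sqrt ((x.1 : ℝ) ^ 2 + (x.2 : ℝ) ^ 2) ≤ k / 2

/-- sup (ℓ∞) norm on ℝ². -/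
def supNorm (θ : ℝ × ℝ) : ℝ := max |θ.1| |θ.2|

/-- the closed ℓ∞-ball `B(r)` in ℝ². -/
def Bset (r : ℝ) : Set (ℝ × ℝ) := {θ | supNorm θ ≤ r}

/-- squared Euclidean norm `|θ|²` on ℝ². -/
def sqNormR (θ : ℝ × ℝ) : ℝ := θ.1 ^ 2 + θ.2 ^ 2

/-- squared Euclidean norm `|y|²` of a lattice point. -/
def sqNorm (y : ℤ × ℤ) : ℝ := (y.1 : ℝ) ^ 2 + (y.2 : ℝ) ^ 2

/-- dot product `θ · x` of θ ∈ ℝ² and x ∈ ℤ². -/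
def dotP (θ : ℝ × ℝ) (x : ℤ × ℤ) : ℝ := θ.1 * x.1 + θ.2 * x.2

/-- `e^{iθ·x}`. -/
def cexp (θ : ℝ × ℝ) (x : ℤ × ℤ) : ℂ := Complex.exp (Complex.I * (dotP θ x : ℂ))

/-- `e^{2πi x·y/L}`. -/
def eL (L : ℕ) (x y : ℤ × ℤ) : ℂ :=
  Complex.exp (2 * (π : ℂ) * Complex.I * ((x.1 * y.1 + x.2 * y.2 : ℤ) : ℂ) / (L : ℂ))

/-- the filter of large even natural numbers. -/
def evenAtTop : Filter ℕ := Filter.atTop ⊓ Filter.principal {n | Even n}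

/-- the Fourier point `2πy/L ∈ ℝ²`. -/
def fourierTheta (L : ℕ) (y : ℤ × ℤ) : ℝ × ℝ := (2 * π * y.1 / L, 2 * π * y.2 / L)

/-- the characteristic function `φ(θ) = ∑_x e^{iθ·x} q(x)` of a jump distribution
supported in `Λ_m`; it is real-valued by symmetry, so we take the real part. -/
def phiOf (m : ℕ) (qq : ℤ × ℤ → ℝ) (θ : ℝ × ℝ) : ℝ :=
  (∑ x ∈ Lam m, cexp θ x * (qq x : ℂ)).re

lemma sin_half_sq (α : ℝ) : Real.sin (α/2) ^ 2 = (1 - Real.cos α)/2 := by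
  have h := Real.cos_two_mul (α/2)
  have h2 : 2 * (α/2) = α := by ring
  rw [h2] at h
  nlinarith [Real.sin_sq_add_cos_sq (α/2)]

lemma norm_exp_sub_one (α : ℝ) (h1 : |α| ≤ π) :
    2 * |α| / π ≤ ‖Complex.exp (Complex.I * α) - 1‖ := by
  have hpi : (0:ℝ) < π := Real.pi_pos
  have h2 : ‖Complex.exp (Complex.I * α) - 1‖ = 2 * |Real.sin (α / 2)| := by
    rw [mul_comm, Complex.exp_mul_I]
    have : (Complex.cos α + Complex.sin α * Complex.I - 1)
        = Complex.mk (Real.cos α - 1) (Real.sin α) := by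
      apply Complex.ext <;> simp [Complex.cos_ofReal_re, Complex.sin_ofReal_re]
    rw [this]
    rw [Complex.norm_def, Complex.normSq_mk]
    have hs : Real.sin (α/2) ^ 2 = (1 - Real.cos α)/2 := sin_half_sq α
    have : (Real.cos α - 1) * (Real.cos α - 1) + Real.sin α * Real.sin α
        = (2 * |Real.sin (α/2)|)^2 := by
      have h4 : (2 * |Real.sin (α/2)|)^2 = 4 * Real.sin (α/2)^2 := by
        rw [mul_pow, sq_abs]; ring
      rw [h4, hs]; nlinarith [Real.sin_sq_add_cos_sq α]
    rw [this, Real.sqrt_sq (by positivity)]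
  rw [h2]
  have habs : |Real.sin (α/2)| = Real.sin (|α|/2) := by
    rcases abs_cases α with ⟨h, _⟩ | ⟨h, hneg⟩
    · rw [h, abs_of_nonneg]
      apply Real.sin_nonneg_of_nonneg_of_le_pi
      · nlinarith [abs_nonneg α, h ▸ abs_nonneg α]
      · nlinarith
    · rw [h]
      have : Real.sin (α/2) = - Real.sin (-α/2) := by rw [neg_div, Real.sin_neg]; ring
      rw [this, abs_neg, abs_of_nonneg]
      apply Real.sin_nonneg_of_nonneg_of_le_pi <;> nlinarith [abs_nonneg α]
  rw [habs]
  have := Real.mul_le_sin (x := |α|/2) (by positivity) (by linarith)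
  have h5 : 2 / π * (|α|/2) = |α| / π := by field_simp
  rw [h5] at this
  rw [div_le_iff₀ hpi] at this ⊢
  linarith

-- geometric sum bound
lemma geom_bound (α : ℝ) (h0 : α ≠ 0) (h1 : |α| ≤ π) (a b : ℤ) :
    ‖∑ n ∈ Finset.Icc a b, Complex.exp (Complex.I * ((n : ℂ) * α))‖ ≤ π / |α| := by
  have hpi : (0:ℝ) < π := Real.pi_pos
  have hα : 0 < |α| := abs_pos.2 h0
  have hMpos : (0:ℝ) ≤ π / |α| := by positivity
  rcases le_or_gt a b with hab | hab
  swap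
  · rw [Finset.Icc_eq_empty (by omega)]; simpa using hMpos
  set z : ℂ := Complex.exp (Complex.I * α) with hz
  have hz1 : z ≠ 1 := by
    intro h
    have h2 := norm_exp_sub_one α h1
    rw [← hz, h, sub_self, norm_zero] at h2
    have : 0 < 2 * |α| / π := by positivity
    linarith
  have key : ∑ n ∈ Finset.Icc a b, Complex.exp (Complex.I * ((n:ℂ) * α))
      = Complex.exp (Complex.I * ((a:ℂ) * α)) * ∑ k ∈ Finset.range (b - a + 1).toNat, z ^ k := by
    rw [Finset.mul_sum]
    rw [show Finset.Icc a b = Finset.map ⟨fun k : ℕ => a + k,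
        (add_right_injective a).comp Nat.cast_injective⟩
        (Finset.range (b - a + 1).toNat) from ?_]
    · rw [Finset.sum_map]
      refine Finset.sum_congr rfl fun k _ => ?_
      simp only [Function.Embedding.coeFn_mk]
      push_cast
      rw [hz, ← Complex.exp_nat_mul, ← Complex.exp_add]
      ring_nf
    · ext x
      simp only [Finset.mem_Icc, Finset.mem_map, Finset.mem_range,
        Function.Embedding.coeFn_mk]
      constructor
      · intro ⟨h1', h2'⟩; exact ⟨(x - a).toNat, by omega, by omega⟩
      · rintro ⟨k, hk, rfl⟩; omega
  rw [key, norm_mul]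
  have hza : ‖Complex.exp (Complex.I * ((a:ℂ) * α))‖ = 1 := by
    simp [Complex.norm_exp, Complex.mul_re]
  rw [hza, one_mul, geom_sum_eq hz1, norm_div]
  have hnum : ‖z ^ (b - a + 1).toNat - 1‖ ≤ 2 := by
    calc ‖z ^ (b - a + 1).toNat - 1‖ ≤ ‖z ^ (b-a+1).toNat‖ + ‖(1:ℂ)‖ := norm_sub_le _ _
      _ ≤ 2 := by
        rw [norm_pow, hz]
        simp [Complex.norm_exp, Complex.mul_re]
        norm_num
  have hden : 2 * |α| / π ≤ ‖z - 1‖ := norm_exp_sub_one α h1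
  calc ‖z ^ (b - a + 1).toNat - 1‖ / ‖z - 1‖ ≤ 2 / (2 * |α| / π) :=
        div_le_div₀ (by norm_num) hnum (by positivity) hden
    _ = π / |α| := by field_simp


lemma abel_bound (α M : ℝ)
    (hM : ∀ a b : ℤ, ‖∑ n ∈ Finset.Icc a b, Complex.exp (Complex.I * ((n:ℂ) * α))‖ ≤ M) :
    ∀ N : ℕ, ∀ a b : ℤ, b ≤ a + N → ∀ f : ℤ → ℝ,
      (∀ m n, a ≤ m → m ≤ n → n ≤ b → f n ≤ f m) → 0 ≤ f a →
      (∀ n, a ≤ n → n ≤ b → 0 ≤ f n) →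
      ‖∑ n ∈ Finset.Icc a b, Complex.exp (Complex.I * ((n:ℂ) * α)) * (f n : ℂ)‖ ≤ M * f a := by
  have hM0 : 0 ≤ M := by
    have := hM 1 0
    rw [Finset.Icc_eq_empty (by omega)] at this
    simpa using this
  intro N
  induction N with
  | zero =>
    intro a b hb f hmono hfa hnn
    rcases lt_or_ge b a with h | h
    · rw [Finset.Icc_eq_empty (by omega)]
      simpa using mul_nonneg hM0 hfa
    · have hba : b = a := by omega
      subst hba
      rw [Finset.Icc_self, Finset.sum_singleton]
      rw [norm_mul, Complex.norm_real, Real.norm_eq_abs, abs_of_nonneg hfa]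
      apply mul_le_mul_of_nonneg_right _ hfa
      have := hM b b
      rwa [Finset.Icc_self, Finset.sum_singleton] at this
  | succ N ih =>
    intro a b hb f hmono hfa hnn
    rcases le_or_gt b (a + N) with h | h
    · exact ih a b h f hmono hfa hnn
    have hab : a < b := by omega
    have hfb : 0 ≤ f b := hnn b (by omega) le_rfl
    have hfab : f b ≤ f a := hmono a b le_rfl (by omega) le_rfl
    set e : ℤ → ℂ := fun n => Complex.exp (Complex.I * ((n:ℂ) * α)) with he
    have split : ∑ n ∈ Finset.Icc a b, e n * (f n : ℂ)
        = (∑ n ∈ Finset.Icc a b, e n * ((f n - f b : ℝ) : ℂ))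
          + (∑ n ∈ Finset.Icc a b, e n) * (f b : ℂ) := by
      rw [Finset.sum_mul, ← Finset.sum_add_distrib]
      refine Finset.sum_congr rfl fun n _ => ?_
      push_cast
      ring
    have hins : Finset.Icc a b = insert b (Finset.Icc a (b - 1)) := by
      ext x
      simp only [Finset.mem_Icc, Finset.mem_insert]
      omega
    have hg : ∑ n ∈ Finset.Icc a b, e n * ((f n - f b : ℝ) : ℂ)
        = ∑ n ∈ Finset.Icc a (b - 1), e n * ((f n - f b : ℝ) : ℂ) := by
      rw [hins, Finset.sum_insert (by simp)]
      simp
    have hIH := ih a (b - 1) (by omega) (fun n => f n - f b)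
      (fun m n h1 h2 h3 => by simpa using sub_le_sub_right (hmono m n h1 h2 (by omega)) (f b))
      (by simpa using sub_nonneg.2 hfab)
      (fun n h1 h2 => by simpa using sub_nonneg.2 (hmono n b h1 (by omega) le_rfl))
    rw [split]
    calc ‖_ + _‖ ≤ ‖∑ n ∈ Finset.Icc a b, e n * ((f n - f b : ℝ) : ℂ)‖
          + ‖(∑ n ∈ Finset.Icc a b, e n)‖ * ‖(f b : ℂ)‖ := by
          rw [← norm_mul]; exact norm_add_le _ _
      _ ≤ M * (f a - f b) + M * f b := by
          apply add_le_add
          · rw [hg]; exact hIH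
          · rw [Complex.norm_real, Real.norm_eq_abs, abs_of_nonneg hfb]
            exact mul_le_mul_of_nonneg_right (hM a b) hfb
      _ = M * f a := by ring

def isq (c : ℤ) : ℤ := (Nat.sqrt c.toNat : ℤ)

lemma isq_nonneg (c : ℤ) : 0 ≤ isq c := Int.natCast_nonneg _

lemma sq_le_iff_abs_le {c : ℤ} (hc : 0 ≤ c) (i : ℤ) : i^2 ≤ c ↔ |i| ≤ isq c := by
  have h1 : i^2 = ((i.natAbs^2 : ℕ) : ℤ) := by
    push_cast
    exact (sq_abs i).symm
  rw [h1, isq, Int.abs_eq_natAbs]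
  have : ((i.natAbs^2 : ℕ) : ℤ) ≤ c ↔ i.natAbs^2 ≤ c.toNat := by
    omega
  rw [this, Nat.cast_le, ← Nat.le_sqrt']

lemma lt_isq_succ_sq {c : ℤ} (hc : 0 ≤ c) : c < (isq c + 1)^2 := by
  have := Nat.lt_succ_sqrt' c.toNat
  unfold isq
  have h2 : (c.toNat : ℤ) < ((Nat.sqrt c.toNat + 1)^2 : ℕ) := by
    exact_mod_cast Nat.lt_of_lt_of_le this (by rw [pow_two])
  push_cast at h2 ⊢
  omega

lemma mem_Dset_iff (k : ℕ) (p : ℤ × ℤ) :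
    p ∈ Dset k ↔ p.1^2 + p.2^2 ≤ (k:ℤ)^2 / 4 := by
  have hk : (0:ℝ) ≤ (k:ℝ) := Nat.cast_nonneg k
  rw [Dset, Finset.mem_filter, Lam, Finset.mem_product, Finset.mem_Icc, Finset.mem_Icc]
  constructor
  · rintro ⟨-, hs⟩
    have h2 : Real.sqrt ((p.1:ℝ)^2 + (p.2:ℝ)^2) ^ 2 ≤ ((k:ℝ)/2)^2 := by
      apply pow_le_pow_left₀ (Real.sqrt_nonneg _) hs
    rw [Real.sq_sqrt (by positivity)] at h2
    rw [Int.le_ediv_iff_mul_le (by norm_num)]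
    have : (((p.1^2 + p.2^2) * 4 : ℤ) : ℝ) ≤ ((k:ℤ)^2 : ℤ) := by push_cast; nlinarith
    exact_mod_cast this
  · intro h
    rw [Int.le_ediv_iff_mul_le (by norm_num)] at h
    have hr : (p.1:ℝ)^2 + (p.2:ℝ)^2 ≤ ((k:ℝ)/2)^2 := by
      have : (((p.1^2 + p.2^2) * 4 : ℤ) : ℝ) ≤ (((k:ℤ)^2 : ℤ) : ℝ) := by exact_mod_cast h
      push_cast at this
      nlinarith
    have h1 : |(p.1:ℝ)| ≤ (k:ℝ)/2 := by
      rw [abs_le]; constructor <;> nlinarith [sq_nonneg (p.2:ℝ), sq_nonneg ((p.1:ℝ) + (k:ℝ)/2), sq_nonneg ((p.1:ℝ) - (k:ℝ)/2)]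
    have h2 : |(p.2:ℝ)| ≤ (k:ℝ)/2 := by
      rw [abs_le]; constructor <;> nlinarith [sq_nonneg (p.1:ℝ), sq_nonneg ((p.2:ℝ) + (k:ℝ)/2), sq_nonneg ((p.2:ℝ) - (k:ℝ)/2)]
    rw [abs_le] at h1 h2
    refine ⟨⟨⟨?_, ?_⟩, ?_, ?_⟩, ?_⟩
    · rw [Int.ceil_le]; push_cast; linarith [h1.1]
    · rw [Int.le_floor]; push_cast; linarith [h1.2]
    · rw [Int.ceil_le]; push_cast; linarith [h2.1]
    · rw [Int.le_floor]; push_cast; linarith [h2.2]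
    · rw [show (k:ℝ)/2 = Real.sqrt (((k:ℝ)/2)^2) from (Real.sqrt_sq (by positivity)).symm]
      exact Real.sqrt_le_sqrt hr

-- reindex a sum over Icc by negation
lemma sum_Icc_neg {M : Type*} [AddCommMonoid M] (G : ℤ → M) (a b : ℤ) :
    ∑ i ∈ Finset.Icc a b, G i = ∑ i ∈ Finset.Icc (-b) (-a), G (-i) := by
  apply Finset.sum_nbij' (fun i => -i) (fun i => -i) <;>
    simp [Finset.mem_Icc] <;> omega

-- telescoping tail bound
lemma inv_sq_tail (a : ℤ) (ha : 1 ≤ a) :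
    ∀ N : ℕ, ∑ j ∈ Finset.Icc (a+1) (a + N), (1:ℝ)/(j:ℝ)^2 ≤ 1/(a:ℝ) - 1/((a:ℝ) + N) := by
  intro N
  induction N with
  | zero => simp
  | succ N ih =>
    have hins : Finset.Icc (a+1) (a + (N+1:ℕ)) = insert (a + N + 1) (Finset.Icc (a+1) (a + N)) := by
      ext x; simp only [Finset.mem_Icc, Finset.mem_insert]; omega
    rw [hins, Finset.sum_insert (by simp only [Finset.mem_Icc]; omega)]
    have hx : (0:ℝ) < (a:ℝ) + N := by
      have : (0:ℝ) < (a:ℝ) := by exact_mod_cast ha.trans_lt' (by norm_num)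
      positivity
    have hy : (0:ℝ) < (a:ℝ) + N + 1 := by linarith
    have hstep : (1:ℝ)/((a:ℝ)+N+1)^2 ≤ 1/((a:ℝ)+N) - 1/((a:ℝ)+N+1) := by
      rw [div_sub_div _ _ (ne_of_gt hx) (ne_of_gt hy)]
      rw [div_le_div_iff₀ (by positivity) (by positivity)]
      nlinarith
    have hc : ((a + N + 1 : ℤ) : ℝ) = (a:ℝ) + N + 1 := by push_cast; ring
    push_cast
    rw [show ((a:ℝ) + (N:ℝ) + 1) = ((a:ℝ)+N+1) from by ring] at *
    calc (1:ℝ)/((a:ℝ)+N+1)^2 + ∑ j ∈ Finset.Icc (a+1) (a + N), (1:ℝ)/(j:ℝ)^2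
        ≤ (1/((a:ℝ)+N) - 1/((a:ℝ)+N+1)) + (1/(a:ℝ) - 1/((a:ℝ) + N)) := by
          apply add_le_add hstep
          convert ih using 2
      _ = 1/(a:ℝ) - 1/((a:ℝ)+N+1) := by ring
      _ ≤ 1/(a:ℝ) - 1/((a:ℝ) + (N+1:ℝ)) := by rw [show (a:ℝ) + ((N:ℝ)+1) = (a:ℝ)+N+1 from by ring]


lemma sum_t (J K : ℕ) (hJ : 1 ≤ J) (hJK : J < K) :
    ∑ j ∈ Finset.Icc (-(K:ℤ)) (K:ℤ), (1:ℝ)/(((max (j^2) ((J:ℤ)^2/4 + 1)) : ℤ) : ℝ)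
      ≤ 14 / (J:ℝ) := by
  set mJ1 : ℤ := (J:ℤ)^2/4 + 1 with hmJ1
  have hdiv := Int.mul_ediv_add_emod ((J:ℤ)^2) 4
  have hmod1 : 0 ≤ (J:ℤ)^2 % 4 := Int.emod_nonneg _ (by norm_num)
  have hmod2 : (J:ℤ)^2 % 4 < 4 := Int.emod_lt_of_pos _ (by norm_num)
  have hdnn : 0 ≤ (J:ℤ)^2/4 := Int.ediv_nonneg (by positivity) (by norm_num)
  have hm0 : 1 ≤ mJ1 := by omega
  have hm1 : (J:ℤ)^2 < 4*mJ1 := by omega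
  have hJR : (0:ℝ) < (J:ℝ) := by exact_mod_cast hJ.trans_lt' (by norm_num)
  have hJ1 : (1:ℝ) ≤ (J:ℝ) := by exact_mod_cast hJ
  set t : ℤ → ℝ := fun j => (1:ℝ)/(((max (j^2) mJ1) : ℤ) : ℝ) with ht
  have htpos : ∀ j : ℤ, 0 < ((max (j^2) mJ1 : ℤ) : ℝ) := by
    intro j
    have : (1:ℤ) ≤ max (j^2) mJ1 := le_trans hm0 (le_max_right _ _)
    exact_mod_cast this.trans_lt' (by norm_num)
  have hsplit : Finset.Icc (-(K:ℤ)) (K:ℤ)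
      = (Finset.Icc (-(K:ℤ)) (-(J:ℤ)-1) ∪ Finset.Icc (-(J:ℤ)) (J:ℤ)) ∪ Finset.Icc ((J:ℤ)+1) (K:ℤ) := by
    ext x
    simp only [Finset.mem_Icc, Finset.mem_union]
    omega
  have hd1 : Disjoint (Finset.Icc (-(K:ℤ)) (-(J:ℤ)-1)) (Finset.Icc (-(J:ℤ)) (J:ℤ)) := by
    rw [Finset.disjoint_left]; intro x; simp only [Finset.mem_Icc]; omega
  have hd2 : Disjoint (Finset.Icc (-(K:ℤ)) (-(J:ℤ)-1) ∪ Finset.Icc (-(J:ℤ)) (J:ℤ)) (Finset.Icc ((J:ℤ)+1) (K:ℤ)) := by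
    rw [Finset.disjoint_left]; intro x; simp only [Finset.mem_Icc, Finset.mem_union]; omega
  rw [hsplit, Finset.sum_union hd2, Finset.sum_union hd1]
  -- right-tail bound
  have htail : ∑ j ∈ Finset.Icc ((J:ℤ)+1) (K:ℤ), t j ≤ 1 / (J:ℝ) := by
    have h1 : ∀ j ∈ Finset.Icc ((J:ℤ)+1) (K:ℤ), t j ≤ (1:ℝ)/(j:ℝ)^2 := by
      intro j hj
      simp only [Finset.mem_Icc] at hj
      have hj1 : (1:ℤ) ≤ j := by omega
      have hjR : (0:ℝ) < (j:ℝ) := by exact_mod_cast hj1.trans_lt' (by norm_num)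
      apply div_le_div_of_nonneg_left (by norm_num) (by positivity)
      have : (j^2 : ℤ) ≤ max (j^2) mJ1 := le_max_left _ _
      exact_mod_cast this
    calc ∑ j ∈ Finset.Icc ((J:ℤ)+1) (K:ℤ), t j
        ≤ ∑ j ∈ Finset.Icc ((J:ℤ)+1) (K:ℤ), (1:ℝ)/(j:ℝ)^2 := Finset.sum_le_sum h1
      _ ≤ 1/(J:ℝ) - 1/((J:ℝ) + ((K-J : ℕ) : ℕ)) := by
          have := inv_sq_tail (J:ℤ) (by exact_mod_cast hJ) (K-J : ℕ)
          rw [show ((J:ℤ) + ((K-J:ℕ):ℕ) : ℤ) = (K:ℤ) from by omega] at this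
          exact this
      _ ≤ 1/(J:ℝ) := by
          have : (0:ℝ) ≤ 1/((J:ℝ) + ((K-J : ℕ) : ℕ)) := by positivity
          linarith
  have hneg : ∑ j ∈ Finset.Icc (-(K:ℤ)) (-(J:ℤ)-1), t j
      = ∑ j ∈ Finset.Icc ((J:ℤ)+1) (K:ℤ), t j := by
    rw [sum_Icc_neg t]
    rw [show -(-(J:ℤ)-1) = (J:ℤ)+1 from by ring, neg_neg]
    refine Finset.sum_congr rfl fun j _ => ?_
    simp only [ht, neg_sq]
  have hmid : ∑ j ∈ Finset.Icc (-(J:ℤ)) (J:ℤ), t j ≤ 12 / (J:ℝ) := by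
    have hb : ∀ j ∈ Finset.Icc (-(J:ℤ)) (J:ℤ), t j ≤ 4/(J:ℝ)^2 := by
      intro j _
      have h1 : t j ≤ 1/(mJ1:ℝ) := by
        apply div_le_div_of_nonneg_left (by norm_num) (by exact_mod_cast hm0.trans_lt' (by norm_num))
        exact Int.cast_le.mpr (le_max_right _ _)
      have h2 : (1:ℝ)/(mJ1:ℝ) ≤ 4/(J:ℝ)^2 := by
        rw [div_le_div_iff₀ (by exact_mod_cast hm0.trans_lt' (by norm_num)) (by positivity)]
        have : ((J:ℤ)^2 : ℝ) ≤ ((4*mJ1 : ℤ) : ℝ) := by exact_mod_cast le_of_lt hm1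
        push_cast at this
        nlinarith
      linarith
    calc ∑ j ∈ Finset.Icc (-(J:ℤ)) (J:ℤ), t j
        ≤ ∑ j ∈ Finset.Icc (-(J:ℤ)) (J:ℤ), 4/(J:ℝ)^2 := Finset.sum_le_sum hb
      _ = ((Finset.Icc (-(J:ℤ)) (J:ℤ)).card : ℝ) * (4/(J:ℝ)^2) := by
          rw [Finset.sum_const, nsmul_eq_mul]
      _ ≤ (3*(J:ℝ)) * (4/(J:ℝ)^2) := by
          apply mul_le_mul_of_nonneg_right _ (by positivity)
          rw [Int.card_Icc]
          have : ((J:ℤ) + 1 - -(J:ℤ)).toNat = 2*J+1 := by omega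
          rw [this]
          push_cast
          linarith
      _ = 12 / (J:ℝ) := by field_simp; ring
  rw [hneg]
  simp only [ht] at htail hmid ⊢
  have h14 : (14:ℝ)/(J:ℝ) = 1/(J:ℝ) + 12/(J:ℝ) + 1/(J:ℝ) := by ring
  rw [h14]
  exact add_le_add (add_le_add htail hmid) htail



set_option maxHeartbeats 2000000 in
lemma row_bound (J K : ℕ) (hJ : 1 ≤ J) (hJK : J < K) (θ₁ θ₂ : ℝ)
    (h0 : θ₁ ≠ 0) (h1 : |θ₁| ≤ π) (j : ℤ)
    (geom_bound : ∀ α : ℝ, α ≠ 0 → |α| ≤ π → ∀ a b : ℤ,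
      ‖∑ n ∈ Finset.Icc a b, Complex.exp (Complex.I * ((n : ℂ) * α))‖ ≤ π / |α|)
    (abel_bound : ∀ (α M : ℝ),
      (∀ a b : ℤ, ‖∑ n ∈ Finset.Icc a b, Complex.exp (Complex.I * ((n:ℂ) * α))‖ ≤ M) →
      ∀ N : ℕ, ∀ a b : ℤ, b ≤ a + N → ∀ f : ℤ → ℝ,
      (∀ m n, a ≤ m → m ≤ n → n ≤ b → f n ≤ f m) → 0 ≤ f a →
      (∀ n, a ≤ n → n ≤ b → 0 ≤ f n) →
      ‖∑ n ∈ Finset.Icc a b, Complex.exp (Complex.I * ((n:ℂ) * α)) * (f n : ℂ)‖ ≤ M * f a) :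
    ‖∑ p ∈ (Dset K \ Dset J).filter (fun p => p.2 = j), cexp (θ₁, θ₂) p / (sqNorm p : ℂ)‖
      ≤ (π / |θ₁|) * (2 / (((max (j^2) ((J:ℤ)^2/4 + 1)) : ℤ) : ℝ)) := by
  have hπ : (0:ℝ) < π := Real.pi_pos
  have hα : (0:ℝ) < |θ₁| := abs_pos.2 h0
  obtain ⟨mK, hmK⟩ : ∃ t : ℤ, t = (K:ℤ)^2/4 := ⟨_, rfl⟩
  obtain ⟨mJ, hmJ⟩ : ∃ t : ℤ, t = (J:ℤ)^2/4 := ⟨_, rfl⟩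
  obtain ⟨aK, haKdef⟩ : ∃ t : ℤ, t = mK - j^2 := ⟨_, rfl⟩
  obtain ⟨aJ, haJdef⟩ : ∃ t : ℤ, t = mJ - j^2 := ⟨_, rfl⟩
  obtain ⟨maxv, hmaxv⟩ : ∃ t : ℤ, t = max (j^2) (mJ + 1) := ⟨_, rfl⟩
  have hmJnn : 0 ≤ mJ := hmJ ▸ Int.ediv_nonneg (by positivity) (by norm_num)
  rw [show (J:ℤ)^2/4 = mJ from hmJ.symm, show max (j^2) (mJ+1) = maxv from hmaxv.symm]
  have hmaxv1 : 1 ≤ maxv := by rw [hmaxv]; exact le_trans (by omega) (le_max_right _ _)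
  have hmaxvR : (0:ℝ) < (maxv:ℝ) := by exact_mod_cast hmaxv1.trans_lt' (by norm_num)
  have hRHS0 : 0 ≤ (π / |θ₁|) * (2 / (maxv:ℝ)) := by positivity
  rcases lt_or_ge aK 0 with haK | haK
  · have hempty : (Dset K \ Dset J).filter (fun p => p.2 = j) = ∅ := by
      rw [Finset.filter_eq_empty_iff]
      rintro p hp rfl
      rw [Finset.mem_sdiff, mem_Dset_iff] at hp
      have := hp.1
      rw [← hmK] at this
      rw [haKdef] at haK
      nlinarith [sq_nonneg p.1]
    rw [hempty, Finset.sum_empty, norm_zero]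
    exact hRHS0
  obtain ⟨A, hA⟩ : ∃ t : ℤ, t = isq aK := ⟨_, rfl⟩
  obtain ⟨l, hl⟩ : ∃ t : ℤ, t = (if 0 ≤ aJ then isq aJ + 1 else 0) := ⟨_, rfl⟩
  obtain ⟨l1, hl1⟩ : ∃ t : ℤ, t = max l 1 := ⟨_, rfl⟩
  have hl0 : 0 ≤ l := by
    rw [hl]; split
    · have := isq_nonneg aJ; omega
    · omega
  have hl11 : 1 ≤ l1 ∧ l ≤ l1 := by rw [hl1]; omega
  have hstart : maxv ≤ l^2 + j^2 ∧ maxv ≤ l1^2 + j^2 := by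
    by_cases haJ : 0 ≤ aJ
    · have h2 := lt_isq_succ_sq haJ
      have hll : l = isq aJ + 1 := by rw [hl, if_pos haJ]
      have hl1l : l1 = l := by rw [hl1]; rw [hll]; have := isq_nonneg aJ; omega
      rw [hl1l, hll]
      have h3 : mJ + 1 ≤ (isq aJ + 1)^2 + j^2 := by
        have h6 : aJ = mJ - j^2 := haJdef
        nlinarith
      have h4 : j^2 ≤ (isq aJ + 1)^2 + j^2 := by nlinarith [sq_nonneg (isq aJ + 1)]
      rw [hmaxv]
      exact ⟨max_le h4 h3, max_le h4 h3⟩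
    · push_neg at haJ
      have hll : l = 0 := by rw [hl, if_neg (not_le.2 haJ)]
      have hl1l : l1 = 1 := by rw [hl1, hll]; omega
      rw [hl1l, hll, hmaxv]
      rw [haJdef] at haJ
      have h3 : mJ + 1 ≤ j^2 := by omega
      have h5 : max (j^2) (mJ+1) = j^2 := max_eq_left h3
      rw [h5]
      constructor <;> nlinarith
  have hmemR : ∀ i : ℤ,
      (i ∈ Finset.Icc (-A) (-l1) ∪ Finset.Icc l A) ↔ (i^2 ≤ aK ∧ ¬ i^2 ≤ aJ) := by
    intro i
    have e1 : i^2 ≤ aK ↔ (-A ≤ i ∧ i ≤ A) := by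
      rw [sq_le_iff_abs_le haK, ← hA, abs_le]
    by_cases haJ : 0 ≤ aJ
    · obtain ⟨B, hB⟩ : ∃ t : ℤ, t = isq aJ := ⟨_, rfl⟩
      have hBnn : 0 ≤ B := hB ▸ isq_nonneg aJ
      have e2 : i^2 ≤ aJ ↔ (-B ≤ i ∧ i ≤ B) := by
        rw [sq_le_iff_abs_le haJ, ← hB, abs_le]
      have hll : l = B + 1 := by rw [hl, if_pos haJ, hB]
      have hl1l : l1 = l := by rw [hl1, hll]; omega
      simp only [Finset.mem_union, Finset.mem_Icc, e1, e2, hl1l, hll]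
      omega
    · push_neg at haJ
      have e2 : ¬ i^2 ≤ aJ := by nlinarith [sq_nonneg i]
      have hll : l = 0 := by rw [hl, if_neg (not_le.2 haJ)]
      have hl1l : l1 = 1 := by rw [hl1, hll]; omega
      simp only [Finset.mem_union, Finset.mem_Icc, e1, e2, hl1l, hll,
        not_false_iff, and_true]
      omega
  have hsum : ∑ p ∈ (Dset K \ Dset J).filter (fun p => p.2 = j), cexp (θ₁, θ₂) p / (sqNorm p : ℂ)
      = ∑ i ∈ Finset.Icc (-A) (-l1) ∪ Finset.Icc l A, cexp (θ₁, θ₂) (i, j) / (sqNorm (i, j) : ℂ) := by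
    apply Finset.sum_nbij' (fun p => p.1) (fun i => (i, j))
    · intro p hp
      rw [Finset.mem_filter, Finset.mem_sdiff, mem_Dset_iff, mem_Dset_iff] at hp
      obtain ⟨⟨h3, h4⟩, h5⟩ := hp
      rw [h5] at h3 h4
      rw [hmemR]
      constructor
      · rw [haKdef, hmK]; linarith
      · rw [haJdef, hmJ]; intro hcon; exact h4 (by linarith)
    · intro i hi
      rw [hmemR] at hi
      obtain ⟨h3, h4⟩ := hi
      rw [haKdef, hmK] at h3
      rw [haJdef, hmJ] at h4
      rw [Finset.mem_filter, Finset.mem_sdiff, mem_Dset_iff, mem_Dset_iff]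
      refine ⟨⟨?_, ?_⟩, rfl⟩
      · show i^2 + j^2 ≤ (K:ℤ)^2/4
        linarith
      · show ¬ (i^2 + j^2 ≤ (J:ℤ)^2/4)
        intro hcon; exact h4 (by linarith)
    · intro p hp
      rw [Finset.mem_filter] at hp
      exact Prod.ext rfl hp.2.symm
    · intro i _; rfl
    · intro p hp
      rw [Finset.mem_filter] at hp
      rw [← hp.2]
  rw [hsum]
  have hdisj : Disjoint (Finset.Icc (-A) (-l1)) (Finset.Icc l A) := by
    rw [Finset.disjoint_left]
    intro x hx hx'
    rw [Finset.mem_Icc] at hx hx'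
    omega
  rw [Finset.sum_union hdisj]
  obtain ⟨f, hf⟩ : ∃ f : ℤ → ℝ, ∀ i : ℤ, f i = 1 / ((i:ℝ)^2 + (j:ℝ)^2) :=
    ⟨_, fun _ => rfl⟩
  have hfnn : ∀ i : ℤ, 0 ≤ f i := by
    intro i
    rw [hf i]
    positivity
  have hF : ∀ i : ℤ, cexp (θ₁, θ₂) (i, j) / (sqNorm (i, j) : ℂ)
      = Complex.exp (Complex.I * ((θ₂ * j : ℝ) : ℂ))
        * (Complex.exp (Complex.I * ((i:ℂ) * (θ₁:ℂ))) * ((f i : ℝ) : ℂ)) := by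
    intro i
    simp only [cexp, dotP, sqNorm, hf]
    have h9 : (Complex.I * ((θ₁ * (i:ℝ) + θ₂ * (j:ℝ) : ℝ):ℂ))
        = Complex.I * ((θ₂ * (j:ℝ) : ℝ):ℂ) + Complex.I * ((i:ℂ) * (θ₁:ℂ)) := by
      push_cast; ring
    rw [div_eq_mul_inv, h9, Complex.exp_add]
    have h10 : ((1 / ((i:ℝ)^2 + (j:ℝ)^2) : ℝ) : ℂ) = ((((i:ℝ)^2 + (j:ℝ)^2 : ℝ)) : ℂ)⁻¹ := by
      rw [one_div, Complex.ofReal_inv]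
    rw [h10]
    ring
  have piece : ∀ (α : ℝ), α ≠ 0 → |α| ≤ π → ∀ (lo : ℤ), 0 ≤ lo → maxv ≤ lo^2 + j^2 →
      ‖∑ i ∈ Finset.Icc lo A, Complex.exp (Complex.I * ((i:ℂ) * (α:ℂ))) * ((f i : ℝ) : ℂ)‖
        ≤ (π / |α|) * (1 / (maxv : ℝ)) := by
    intro α hα0 hα1 lo hlo hlosq
    have hmono : ∀ m n : ℤ, lo ≤ m → m ≤ n → n ≤ A → f n ≤ f m := by
      intro m n hm hmn _
      rw [hf n, hf m]
      have h7 : (lo:ℝ) ≤ (m:ℝ) := by exact_mod_cast hm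
      have h8 : (0:ℝ) ≤ (lo:ℝ) := by exact_mod_cast hlo
      have h9 : (m:ℝ) ≤ (n:ℝ) := by exact_mod_cast hmn
      have hlosqR : (maxv:ℝ) ≤ (lo:ℝ)^2 + (j:ℝ)^2 := by exact_mod_cast hlosq
      have hmden : (0:ℝ) < (m:ℝ)^2 + (j:ℝ)^2 := by nlinarith
      apply div_le_div_of_nonneg_left (by norm_num) hmden
      nlinarith
    have hb := abel_bound α (π / |α|) (geom_bound α hα0 hα1) (A - lo).toNat lo A
      (by omega) f hmono (hfnn lo) (fun n _ _ => hfnn n)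
    calc ‖∑ i ∈ Finset.Icc lo A, Complex.exp (Complex.I * ((i:ℂ) * (α:ℂ))) * ((f i : ℝ) : ℂ)‖
        ≤ (π / |α|) * f lo := hb
      _ ≤ (π / |α|) * (1 / (maxv : ℝ)) := by
          apply mul_le_mul_of_nonneg_left _ (by positivity)
          rw [hf lo]
          apply div_le_div_of_nonneg_left (by norm_num) hmaxvR
          exact_mod_cast hlosq
  have hexp1 : ‖Complex.exp (Complex.I * ((θ₂ * j : ℝ) : ℂ))‖ = 1 := by
    simp [Complex.norm_exp, Complex.mul_re]
  have hright : ‖∑ i ∈ Finset.Icc l A, cexp (θ₁, θ₂) (i, j) / (sqNorm (i, j) : ℂ)‖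
      ≤ (π / |θ₁|) * (1 / (maxv : ℝ)) := by
    have heq : ∑ i ∈ Finset.Icc l A, cexp (θ₁, θ₂) (i, j) / (sqNorm (i, j) : ℂ)
        = Complex.exp (Complex.I * ((θ₂ * j : ℝ) : ℂ))
          * ∑ i ∈ Finset.Icc l A, Complex.exp (Complex.I * ((i:ℂ) * (θ₁:ℂ))) * ((f i : ℝ) : ℂ) := by
      rw [Finset.mul_sum]
      exact Finset.sum_congr rfl fun i _ => hF i
    rw [heq, norm_mul, hexp1, one_mul]
    exact piece θ₁ h0 h1 l hl0 hstart.1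
  have hleft : ‖∑ i ∈ Finset.Icc (-A) (-l1), cexp (θ₁, θ₂) (i, j) / (sqNorm (i, j) : ℂ)‖
      ≤ (π / |θ₁|) * (1 / (maxv : ℝ)) := by
    have hswap : ∑ i ∈ Finset.Icc (-A) (-l1), cexp (θ₁, θ₂) (i, j) / (sqNorm (i, j) : ℂ)
        = Complex.exp (Complex.I * ((θ₂ * j : ℝ) : ℂ))
          * ∑ i ∈ Finset.Icc l1 A, Complex.exp (Complex.I * ((i:ℂ) * ((-θ₁):ℂ))) * ((f i : ℝ) : ℂ) := by
      rw [sum_Icc_neg (fun i => cexp (θ₁, θ₂) (i, j) / (sqNorm (i, j) : ℂ)) (-A) (-l1)]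
      simp only [neg_neg]
      rw [Finset.mul_sum]
      refine Finset.sum_congr rfl fun i hi => ?_
      rw [hF (-i)]
      have hfi : f (-i) = f i := by rw [hf, hf]; push_cast; rw [neg_sq]
      rw [hfi]
      have h11 : Complex.exp (Complex.I * (((-i : ℤ):ℂ) * (θ₁:ℂ)))
          = Complex.exp (Complex.I * ((i:ℂ) * ((-θ₁):ℂ))) := by
        congr 1
        push_cast
        ring
      rw [h11]
    rw [hswap, norm_mul, hexp1, one_mul]
    have := piece (-θ₁) (neg_ne_zero.2 h0) (by rwa [abs_neg]) l1 (by omega) hstart.2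
    rw [abs_neg] at this
    simp only [Complex.ofReal_neg] at this
    exact this
  calc ‖_ + _‖ ≤ ‖∑ i ∈ Finset.Icc (-A) (-l1), cexp (θ₁, θ₂) (i, j) / (sqNorm (i, j) : ℂ)‖
       + ‖∑ i ∈ Finset.Icc l A, cexp (θ₁, θ₂) (i, j) / (sqNorm (i, j) : ℂ)‖ := norm_add_le _ _
    _ ≤ (π / |θ₁|) * (1 / (maxv : ℝ)) + (π / |θ₁|) * (1 / (maxv : ℝ)) := add_le_add hleft hright
    _ = (π / |θ₁|) * (2 / (maxv : ℝ)) := by ring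


lemma swap_sum (J K : ℕ) (θ : ℝ × ℝ) :
    ∑ y ∈ Dset K \ Dset J, cexp θ y / (sqNorm y : ℂ)
      = ∑ y ∈ Dset K \ Dset J, cexp (θ.2, θ.1) y / (sqNorm y : ℂ) := by
  apply Finset.sum_nbij' Prod.swap Prod.swap
  · intro y hy
    rw [Finset.mem_sdiff, mem_Dset_iff, mem_Dset_iff] at hy ⊢
    simp only [Prod.swap, Prod.fst, Prod.snd] at *
    constructor
    · linarith [hy.1]
    · intro hcon; exact hy.2 (by linarith)
  · intro y hy
    rw [Finset.mem_sdiff, mem_Dset_iff, mem_Dset_iff] at hy ⊢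
    simp only [Prod.swap, Prod.fst, Prod.snd] at *
    constructor
    · linarith [hy.1]
    · intro hcon; exact hy.2 (by linarith)
  · intro y _; exact Prod.swap_swap y
  · intro y _; exact Prod.swap_swap y
  · intro y _
    simp only [cexp, dotP, sqNorm, Prod.swap]
    rw [show θ.1 * (y.1:ℝ) + θ.2 * (y.2:ℝ) = θ.2 * (y.2:ℝ) + θ.1 * (y.1:ℝ) from by ring,
      show (y.1:ℝ)^2 + (y.2:ℝ)^2 = (y.2:ℝ)^2 + (y.1:ℝ)^2 from by ring]

set_option maxHeartbeats 1000000 in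
lemma key_bound (J K : ℕ) (hJ : 1 ≤ J) (hJK : J < K) (θ₁ θ₂ : ℝ)
    (h0 : θ₁ ≠ 0) (h1 : |θ₁| ≤ π) :
    ‖∑ y ∈ Dset K \ Dset J, cexp (θ₁, θ₂) y / (sqNorm y : ℂ)‖
      ≤ 28 * π / ((J:ℝ) * |θ₁|) := by
  have hπ : (0:ℝ) < π := Real.pi_pos
  have hα : (0:ℝ) < |θ₁| := abs_pos.2 h0
  have hJR : (0:ℝ) < (J:ℝ) := by exact_mod_cast hJ.trans_lt' (by norm_num)
  have hmap : ∀ y ∈ Dset K \ Dset J, y.2 ∈ Finset.Icc (-(K:ℤ)) (K:ℤ) := by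
    intro y hy
    rw [Finset.mem_sdiff, mem_Dset_iff] at hy
    have h2 : y.2^2 ≤ (K:ℤ)^2 / 4 := by nlinarith [hy.1, sq_nonneg y.1]
    have h3 : (K:ℤ)^2/4 ≤ (K:ℤ)^2 := Int.ediv_le_self _ (by positivity)
    rw [Finset.mem_Icc]
    constructor <;> nlinarith [sq_nonneg (y.2 + (K:ℤ)), sq_nonneg (y.2 - (K:ℤ))]
  rw [← Finset.sum_fiberwise_of_maps_to hmap (fun y => cexp (θ₁, θ₂) y / (sqNorm y : ℂ))]
  calc ‖∑ j ∈ Finset.Icc (-(K:ℤ)) (K:ℤ), ∑ p ∈ (Dset K \ Dset J).filter (fun p => p.2 = j),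
          cexp (θ₁, θ₂) p / (sqNorm p : ℂ)‖
      ≤ ∑ j ∈ Finset.Icc (-(K:ℤ)) (K:ℤ), ‖∑ p ∈ (Dset K \ Dset J).filter (fun p => p.2 = j),
          cexp (θ₁, θ₂) p / (sqNorm p : ℂ)‖ := norm_sum_le _ _
    _ ≤ ∑ j ∈ Finset.Icc (-(K:ℤ)) (K:ℤ), (π / |θ₁|) * (2 / (((max (j^2) ((J:ℤ)^2/4 + 1)) : ℤ) : ℝ)) := by
        apply Finset.sum_le_sum
        intro j _
        exact row_bound J K hJ hJK θ₁ θ₂ h0 h1 j geom_bound (abel_bound)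
    _ = (2 * (π / |θ₁|)) * ∑ j ∈ Finset.Icc (-(K:ℤ)) (K:ℤ),
          (1:ℝ)/(((max (j^2) ((J:ℤ)^2/4 + 1)) : ℤ) : ℝ) := by
        rw [Finset.mul_sum]
        exact Finset.sum_congr rfl fun j _ => by ring
    _ ≤ (2 * (π / |θ₁|)) * (14 / (J:ℝ)) := by
        apply mul_le_mul_of_nonneg_left (sum_t J K hJ hJK) (by positivity)
    _ = 28 * π / ((J:ℝ) * |θ₁|) := by field_simp; ring


/-- There is a finite constant `C₀` such that for all integers `J ≥ 1`, all
`θ ∈ B(π)` with `θ ≠ 0`, and all integers `K > J`,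
`|∑_{y ∈ D_K \ D_J} e^{iθ·y}/|y|²| ≤ C₀ / (1 ∧ (J‖θ‖_∞))`. -/
theorem sum_exp_annulus_bound :
    ∃ C₀ : ℝ, ∀ J : ℕ, 1 ≤ J → ∀ θ : ℝ × ℝ, supNorm θ ≤ π → θ ≠ 0 →
      ∀ K : ℕ, J < K →
        ‖∑ y ∈ Dset K \ Dset J, cexp θ y / (sqNorm y : ℂ)‖
          ≤ C₀ / min 1 (J * supNorm θ) := by
  refine ⟨28 * π, fun J hJ θ hsup hθ K hJK => ?_⟩
  simp only [supNorm] at hsup ⊢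
  have hπ : (0:ℝ) < π := Real.pi_pos
  have hJR : (0:ℝ) < (J:ℝ) := by exact_mod_cast hJ.trans_lt' (by norm_num)
  have hsup0 : 0 < max |θ.1| |θ.2| := by
    rcases lt_or_ge 0 (max |θ.1| |θ.2|) with h | h
    · exact h
    · exfalso
      apply hθ
      have h1 : |θ.1| ≤ 0 := le_trans (le_max_left _ _) h
      have h2 : |θ.2| ≤ 0 := le_trans (le_max_right _ _) h
      exact Prod.ext (abs_eq_zero.1 (le_antisymm h1 (abs_nonneg _)))
        (abs_eq_zero.1 (le_antisymm h2 (abs_nonneg _)))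
  have hminpos : 0 < min 1 ((J:ℝ) * max |θ.1| |θ.2|) := lt_min (by norm_num) (by positivity)
  have hminle : min 1 ((J:ℝ) * max |θ.1| |θ.2|) ≤ (J:ℝ) * max |θ.1| |θ.2| := min_le_right _ _
  have final : ∀ v : ℝ, ‖∑ y ∈ Dset K \ Dset J, cexp θ y / (sqNorm y : ℂ)‖
      ≤ 28 * π / ((J:ℝ) * v) → v = max |θ.1| |θ.2| →
      ‖∑ y ∈ Dset K \ Dset J, cexp θ y / (sqNorm y : ℂ)‖
        ≤ 28 * π / min 1 ((J:ℝ) * max |θ.1| |θ.2|) := by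
    rintro v hv rfl
    refine hv.trans ?_
    exact div_le_div_of_nonneg_left (by positivity) hminpos hminle
  rcases le_total |θ.2| |θ.1| with hc | hc
  · have hmax : max |θ.1| |θ.2| = |θ.1| := max_eq_left hc
    have h01 : θ.1 ≠ 0 := abs_pos.1 (hmax ▸ hsup0)
    apply final |θ.1| _ hmax.symm
    have := key_bound J K hJ hJK θ.1 θ.2 h01 (le_trans (le_max_left _ _) hsup)
    rwa [Prod.mk.eta] at this
  · have hmax : max |θ.1| |θ.2| = |θ.2| := max_eq_right hc
    have h02 : θ.2 ≠ 0 := abs_pos.1 (hmax ▸ hsup0)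
    apply final |θ.2| _ hmax.symm
    rw [swap_sum]
    exact key_bound J K hJ hJK θ.2 θ.1 h02 (le_trans (le_max_right _ _) hsup)
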